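/- Let X be a metric space and L a level set with 0 ∉ L. Then the canonical map C_L : X → ∂T_X^L is micro-uniform (uniformly continuous). -/

import Mathlib

open scoped Classical

/-- The `s`-connected component of `x`. -/
def chainComp {X : Type*} [MetricSpace X] (s : ℝ) (x : X) : Set X :=
  {y | Relation.ReflTransGen (fun a b => dist a b ≤ s) x y}

/-- The canonical ultrametric distance between the branches `C_L(x)` and `C_L(y)` of
the canonical `L`-tower. -/
noncomputable def canonDist {X : Type*} [MetricSpace X] (L : Set ℝ) (x y : X) : ℝ :=
  if ∀ l ∈ L, chainComp l x = chainComp l y then 0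
  else sInf {l | l ∈ L ∧ chainComp l x = chainComp l y}

lemma chainComp_eq_of_rel {X : Type*} [MetricSpace X] {s : ℝ} {x y : X}
    (h : Relation.ReflTransGen (fun a b => dist a b ≤ s) x y) :
    chainComp s x = chainComp s y := by
  have hs : Symmetric (Relation.ReflTransGen (fun a b : X => dist a b ≤ s)) :=
    by
      haveI : Std.Symm (fun a b : X => dist a b ≤ s) := ⟨fun a b hab => by rwa [dist_comm]⟩
      exact fun a b hab => Std.Symm.symm a b hab
  ext z
  simp only [chainComp, Set.mem_setOf_eq]
  exact ⟨fun hz => (hs h).trans hz, fun hz => h.trans hz⟩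

lemma rel_of_chainComp_eq {X : Type*} [MetricSpace X] {s : ℝ} {x y : X}
    (h : chainComp s x = chainComp s y) :
    Relation.ReflTransGen (fun a b => dist a b ≤ s) x y := by
  have : y ∈ chainComp s y := Relation.ReflTransGen.refl
  rw [← h] at this
  exact this

/-- If `L` is a level set with `0 ∉ L`, then the canonical map `C_L : X → ∂T_X^L` is
micro-uniform (uniformly continuous). -/
theorem canonMap_microUniform {X : Type*} [MetricSpace X] (L : Set ℝ)
    (hLpos : ∀ l ∈ L, 0 < l)
    (hLsup : ∀ r : ℝ, ∃ l ∈ L, r ≤ l)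
    (hLicc : ∀ a ∈ L, ∀ b ∈ L, (L ∩ Set.Icc a b).Finite)
    (hLinf : (∃ a ∈ L, (L ∩ Set.Iic a).Infinite) → ∀ ε : ℝ, 0 < ε → ∃ l ∈ L, l ≤ ε) :
    ∀ ε : ℝ, 0 < ε → ∃ δ : ℝ, 0 < δ ∧
      ∀ x y : X, dist x y ≤ δ → canonDist L x y ≤ ε := by
  intro ε hε
  by_cases hsmall : ∃ l ∈ L, l ≤ ε
  · obtain ⟨l, hlL, hlε⟩ := hsmall
    refine ⟨l, hLpos l hlL, fun x y hxy => ?_⟩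
    have hcomp : chainComp l x = chainComp l y :=
      chainComp_eq_of_rel (Relation.ReflTransGen.single hxy)
    unfold canonDist
    split_ifs with h
    · exact le_of_lt hε
    · refine le_trans (csInf_le ⟨0, fun m hm => (hLpos m hm.1).le⟩ ⟨hlL, hcomp⟩) hlε
  · -- every element of L exceeds ε; L has a minimum m
    push_neg at hsmall
    obtain ⟨a, haL, -⟩ := hLsup 0
    have hfin : (L ∩ Set.Iic a).Finite := by
      by_contra hinf
      obtain ⟨l, hlL, hlε⟩ := hLinf ⟨a, haL, hinf⟩ ε hε
      exact absurd (hsmall l hlL) (not_lt.mpr hlε)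
    have hne : (L ∩ Set.Iic a).Nonempty := ⟨a, haL, le_refl a⟩
    obtain ⟨m, ⟨hmL, hma⟩, hmin⟩ := Set.exists_min_image _ id hfin hne
    have hmle : ∀ l ∈ L, m ≤ l := by
      intro l hlL
      by_cases hla : l ≤ a
      · exact hmin l ⟨hlL, hla⟩
      · exact le_trans hma (le_of_not_ge hla)
    refine ⟨m, hLpos m hmL, fun x y hxy => ?_⟩
    have hrel : Relation.ReflTransGen (fun a b : X => dist a b ≤ m) x y :=
      Relation.ReflTransGen.single hxy
    have hall : ∀ l ∈ L, chainComp l x = chainComp l y := by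
      intro l hlL
      exact chainComp_eq_of_rel (Relation.ReflTransGen.mono (by intro a b hab; exact le_trans hab (hmle l hlL)) x y hrel)
    unfold canonDist
    rw [if_pos hall]
    exact hε.le
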